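/- Let C be a convex corner on Herm(A) with dim A > 1. A supporting hyperplane defining a facet of C cannot pass through the origin; hence every facet can be written as F = {X ∈ C : Tr(XY) = 1} for some Y. -/

import Mathlib

open Matrix Module
open scoped ComplexOrder

section AuxFacet
variable {n : ℕ}

theorem realSmul_matrix (r : ℝ) (A : Matrix (Fin n) (Fin n) ℂ) : (r : ℂ) • A = r • A := by
  ext i j; simp [Complex.real_smul]

/-- Real part of `Tr(X * Y)` as an `ℝ`-linear functional in `X`. -/
noncomputable def traceRe (Y : Matrix (Fin n) (Fin n) ℂ) :
    Matrix (Fin n) (Fin n) ℂ →ₗ[ℝ] ℝ where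
  toFun X := ((X * Y).trace).re
  map_add' A B := by rw [add_mul, trace_add, Complex.add_re]
  map_smul' r X := by
    simp only [RingHom.id_apply, smul_eq_mul]
    rw [smul_mul_assoc, trace_smul]
    simp [Complex.smul_re]

theorem vecMulVec_mulVec' (a b x : Fin n → ℂ) : (vecMulVec a b) *ᵥ x = (b ⬝ᵥ x) • a := by
  ext i
  simp [vecMulVec_apply, mulVec, dotProduct, Finset.mul_sum, mul_comm, mul_assoc, mul_left_comm]

theorem conjTranspose_vecMulVec (a b : Fin n → ℂ) :
    (vecMulVec a b)ᴴ = vecMulVec (star b) (star a) := by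
  ext i j; simp [vecMulVec_apply, conjTranspose_apply, mul_comm]

theorem dot_sum_mulVec (t : Finset (Matrix (Fin n) (Fin n) ℂ)) (v w : Fin n → ℂ) :
    w ⬝ᵥ ((∑ X ∈ t, X) *ᵥ v) = ∑ X ∈ t, w ⬝ᵥ (X *ᵥ v) := by
  induction t using Finset.cons_induction with
  | empty => simp
  | cons a s ha ih => rw [Finset.sum_cons, add_mulVec, dotProduct_add, ih, Finset.sum_cons]


/-- The ℝ-submodule of Hermitian matrices. -/
noncomputable def hermSubmodule (n : ℕ) : Submodule ℝ (Matrix (Fin n) (Fin n) ℂ) where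
  carrier := {Z | Zᴴ = Z}
  add_mem' := by intro a b ha hb; simp only [Set.mem_setOf_eq] at *; rw [conjTranspose_add, ha, hb]
  zero_mem' := by simp
  smul_mem' := by
    intro r Z hZ; simp only [Set.mem_setOf_eq] at *
    rw [conjTranspose_smul, hZ]; simp

noncomputable def skewSubmodule (n : ℕ) : Submodule ℝ (Matrix (Fin n) (Fin n) ℂ) where
  carrier := {Z | Zᴴ = -Z}
  add_mem' := by
    intro a b ha hb; simp only [Set.mem_setOf_eq] at *
    rw [conjTranspose_add, ha, hb, neg_add]
  zero_mem' := by simp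
  smul_mem' := by
    intro r Z hZ; simp only [Set.mem_setOf_eq] at *
    rw [conjTranspose_smul, hZ]; simp

/-- Multiplication by `I` as an ℝ-linear equivalence. -/
noncomputable def mulIEquiv (n : ℕ) : Matrix (Fin n) (Fin n) ℂ ≃ₗ[ℝ] Matrix (Fin n) (Fin n) ℂ where
  toFun Z := Complex.I • Z
  map_add' a b := smul_add _ a b
  map_smul' r Z := smul_comm _ r Z
  invFun Z := (-Complex.I) • Z
  left_inv Z := by simp [smul_smul]
  right_inv Z := by simp [smul_smul]

theorem map_mulIEquiv (n : ℕ) :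
    (hermSubmodule n).map (mulIEquiv n : Matrix (Fin n) (Fin n) ℂ →ₗ[ℝ] Matrix (Fin n) (Fin n) ℂ)
      = skewSubmodule n := by
  ext Z
  rw [Submodule.mem_map_equiv]
  show ((-Complex.I) • Z)ᴴ = (-Complex.I) • Z ↔ Zᴴ = -Z
  rw [conjTranspose_smul]
  constructor
  · intro h
    have h2 := congrArg (fun W => (-Complex.I) • W) h
    simp only [smul_smul] at h2
    have e1 : (-Complex.I) * star (-Complex.I) = 1 := by simp
    have e2 : (-Complex.I) * (-Complex.I) = -1 := by
      simp [neg_mul_neg, Complex.I_mul_I]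
    rw [e1, e2] at h2
    simpa using h2
  · intro h; rw [h]; simp [smul_smul]
theorem herm_sup_skew (n : ℕ) : hermSubmodule n ⊔ skewSubmodule n = ⊤ := by
  rw [eq_top_iff]
  intro Z _
  rw [Submodule.mem_sup]
  refine ⟨(2⁻¹ : ℝ) • (Z + Zᴴ), ?_, (2⁻¹ : ℝ) • (Z - Zᴴ), ?_, ?_⟩
  · exact Submodule.smul_mem _ _ (by show (Z + Zᴴ)ᴴ = Z + Zᴴ; rw [conjTranspose_add, conjTranspose_conjTranspose, add_comm])
  · exact Submodule.smul_mem _ _ (by show (Z - Zᴴ)ᴴ = -(Z - Zᴴ); rw [conjTranspose_sub, conjTranspose_conjTranspose, neg_sub])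
  · rw [← smul_add]; ring_nf; module
theorem herm_inf_skew (n : ℕ) : hermSubmodule n ⊓ skewSubmodule n = ⊥ := by
  rw [eq_bot_iff]
  rintro Z ⟨h1, h2⟩
  have : Zᴴ = Zᴴ := rfl
  have h3 : Z = -Z := by
    have := (h1 : Zᴴ = Z).symm.trans (h2 : Zᴴ = -Z)
    exact this
  have hz : Z = 0 := by
    have h4 : Z + Z = 0 := by nth_rewrite 2 [h3]; simp
    have : (2:ℂ) • Z = 0 := by rw [two_smul]; exact h4
    simpa using this
  simp [hz]
theorem finrank_hermSubmodule (n : ℕ) : finrank ℝ (hermSubmodule n) = n ^ 2 := by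
  have h1 : finrank ℝ (skewSubmodule n) = finrank ℝ (hermSubmodule n) := by
    rw [← map_mulIEquiv n]; exact (LinearEquiv.finrank_map_eq _ _)
  have h2 := Submodule.finrank_sup_add_finrank_inf_eq (hermSubmodule n) (skewSubmodule n)
  rw [herm_sup_skew, herm_inf_skew] at h2
  have h3 : finrank ℝ (⊤ : Submodule ℝ (Matrix (Fin n) (Fin n) ℂ)) = n * n * 2 := by
    rw [finrank_top, Module.finrank_matrix]; simp [Complex.finrank_real_complex]
  rw [h3, h1] at h2
  simp only [finrank_bot, add_zero] at h2
  have : n * n = n ^ 2 := by ring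
  omega

section Aux2
variable {n : ℕ}

theorem master_psd {A : Matrix (Fin n) (Fin n) ℂ} (hA : A.IsHermitian) (c d : ℝ)
    (h : ∀ i, c * hA.eigenvalues i ≤ d) :
    ((d : ℂ) • (1 : Matrix (Fin n) (Fin n) ℂ) - (c : ℂ) • A).PosSemidef := by
  set U : Matrix (Fin n) (Fin n) ℂ := (hA.eigenvectorUnitary : Matrix (Fin n) (Fin n) ℂ) with hUdef
  have hU : U * star U = 1 := mem_unitaryGroup_iff.mp hA.eigenvectorUnitary.2
  have key : (d : ℂ) • (1 : Matrix (Fin n) (Fin n) ℂ) - (c : ℂ) • A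
      = U * diagonal ((↑) ∘ fun i => d - c * hA.eigenvalues i) * star U := by
    have hdiag : (diagonal ((↑) ∘ fun i => d - c * hA.eigenvalues i) : Matrix (Fin n) (Fin n) ℂ)
        = (d : ℂ) • (1 : Matrix (Fin n) (Fin n) ℂ) - (c : ℂ) • diagonal ((↑) ∘ hA.eigenvalues) := by
      ext i j
      by_cases hij : i = j <;> simp [diagonal_apply, hij] <;> push_cast <;> ring
    have hspec : A = U * diagonal (Complex.ofReal ∘ hA.eigenvalues) * star U :=
      hA.spectral_theorem
    rw [hdiag, mul_sub, sub_mul]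
    congr 1
    · rw [mul_smul_comm, mul_one, smul_mul_assoc, hU]
    · rw [mul_smul_comm, smul_mul_assoc, ← hspec]
  rw [key]
  refine PosSemidef.mul_mul_conjTranspose_same ?_ U
  refine posSemidef_diagonal_iff.mpr fun i => ?_
  have h0 : (0:ℝ) ≤ d - c * hA.eigenvalues i := sub_nonneg.mpr (h i)
  simpa [Function.comp] using Complex.zero_le_real.mpr h0

theorem shift_psd {Z : Matrix (Fin n) (Fin n) ℂ} (hZ : Z.IsHermitian) :
    ∃ c : ℝ, ((c : ℂ) • (1 : Matrix (Fin n) (Fin n) ℂ) + Z).PosSemidef := by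
  refine ⟨∑ i, |hZ.eigenvalues i|, ?_⟩
  have := master_psd hZ (-1) (∑ i, |hZ.eigenvalues i|) (fun i => ?_)
  · simpa [neg_smul, sub_neg_eq_add, neg_one_smul] using this
  · have h1 : -hZ.eigenvalues i ≤ |hZ.eigenvalues i| := neg_le_abs _
    have h2 : |hZ.eigenvalues i| ≤ ∑ j, |hZ.eigenvalues j| :=
      Finset.single_le_sum (f := fun j => |hZ.eigenvalues j|) (fun j _ => abs_nonneg _) (Finset.mem_univ i)
    nlinarith

theorem posdef_lower (hn : 0 < n) {A : Matrix (Fin n) (Fin n) ℂ} (hA : A.PosDef) :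
    ∃ δ : ℝ, 0 < δ ∧ (A - (δ : ℂ) • (1 : Matrix (Fin n) (Fin n) ℂ)).PosSemidef := by
  haveI : Nonempty (Fin n) := ⟨⟨0, hn⟩⟩
  set δ := Finset.univ.inf' Finset.univ_nonempty hA.1.eigenvalues with hδdef
  refine ⟨δ, ?_, ?_⟩
  · rw [Finset.lt_inf'_iff]
    exact fun i _ => hA.eigenvalues_pos i
  · have := master_psd hA.1 (-1) (-δ) (fun i => ?_)
    · have e : ((-δ : ℝ) : ℂ) • (1 : Matrix (Fin n) (Fin n) ℂ) - ((-1 : ℝ) : ℂ) • A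
          = A - (δ : ℂ) • 1 := by push_cast; module
      rwa [e] at this
    · have : δ ≤ hA.1.eigenvalues i := Finset.inf'_le _ (Finset.mem_univ i)
      nlinarith

theorem psd_upper {B : Matrix (Fin n) (Fin n) ℂ} (hB : B.PosSemidef) (δ : ℝ) (hδ : 0 < δ) :
    ∃ ε : ℝ, 0 < ε ∧ ((δ : ℂ) • (1 : Matrix (Fin n) (Fin n) ℂ) - (ε : ℂ) • B).PosSemidef := by
  set c := (∑ i, |hB.1.eigenvalues i|) + 1 with hcdef
  have hc : 0 < c := by
    have : (0:ℝ) ≤ ∑ i, |hB.1.eigenvalues i| := Finset.sum_nonneg fun i _ => abs_nonneg _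
    linarith
  refine ⟨δ / c, div_pos hδ hc, master_psd hB.1 (δ / c) δ (fun i => ?_)⟩
  have h2 : hB.1.eigenvalues i ≤ c := by
    have h1 : hB.1.eigenvalues i ≤ |hB.1.eigenvalues i| := le_abs_self _
    have h3 : |hB.1.eigenvalues i| ≤ ∑ j, |hB.1.eigenvalues j| :=
      Finset.single_le_sum (f := fun j => |hB.1.eigenvalues j|) (fun j _ => abs_nonneg _) (Finset.mem_univ i)
    linarith
  calc δ / c * hB.1.eigenvalues i ≤ δ / c * c :=
        mul_le_mul_of_nonneg_left h2 (le_of_lt (div_pos hδ hc))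
    _ = δ := div_mul_cancel₀ δ (ne_of_gt hc)

theorem psd_smul {B : Matrix (Fin n) (Fin n) ℂ} (hB : B.PosSemidef) {ε : ℝ} (hε : 0 ≤ ε) :
    ((ε : ℂ) • B).PosSemidef := by
  have := master_psd hB.1 (-ε) 0 (fun i => ?_)
  · have e : ((0 : ℝ) : ℂ) • (1 : Matrix (Fin n) (Fin n) ℂ) - ((-ε : ℝ) : ℂ) • B
        = (ε : ℂ) • B := by push_cast; module
    rwa [e] at this
  · have := hB.eigenvalues_nonneg i
    nlinarith

end Aux2
end AuxFacet

open Matrix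
open scoped ComplexOrder

/-- A convex corner: a nonempty closed convex hereditary subset of the PSD cone. -/
def IsConvexCorner {n : ℕ} (C : Set (Matrix (Fin n) (Fin n) ℂ)) : Prop :=
  C.Nonempty ∧ IsClosed C ∧ Convex ℝ C ∧ (∀ A ∈ C, A.PosSemidef) ∧
    ∀ A ∈ C, ∀ B : Matrix (Fin n) (Fin n) ℂ, B.PosSemidef → (A - B).PosSemidef → B ∈ C

/-- The anti-blocker `X♯ = {B ≥ 0 : Tr(AB) ≤ 1 for all A ∈ X}`. -/
def antiBlocker {n : ℕ} (C : Set (Matrix (Fin n) (Fin n) ℂ)) :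
    Set (Matrix (Fin n) (Fin n) ℂ) :=
  {B | B.PosSemidef ∧ ∀ A ∈ C, ((A * B).trace).re ≤ 1}

/-- For `dim A > 1`, a supporting hyperplane defining a facet of a
convex corner cannot pass through the origin; hence every facet can be written as
`F = {X ∈ C : Tr(XY') = 1}` for some `Y'` (also a supporting hyperplane). -/
theorem facet_hyperplane_not_through_origin {n : ℕ} (hn : 1 < n)
    (C : Set (Matrix (Fin n) (Fin n) ℂ)) (hC : IsConvexCorner C)
    (Y : Matrix (Fin n) (Fin n) ℂ) (hY : Y.IsHermitian)
    (α : ℝ) (hsupp : ∀ X ∈ C, ((X * Y).trace).re ≤ α)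
    (hdim : Module.finrank ℝ
      (affineSpan ℝ {X ∈ C | ((X * Y).trace).re = α}).direction = n ^ 2 - 1) :
    α ≠ 0 ∧ ∃ Y' : Matrix (Fin n) (Fin n) ℂ, Y'.IsHermitian ∧
      (∀ X ∈ C, ((X * Y').trace).re ≤ 1) ∧
      {X ∈ C | ((X * Y).trace).re = α} = {X ∈ C | ((X * Y').trace).re = 1} := by
  classical
  obtain ⟨⟨A₀, hA₀⟩, hclosed, hconv, hpsd, hhered⟩ := hC
  have h0C : (0 : Matrix (Fin n) (Fin n) ℂ) ∈ C := by
    have h := hhered A₀ hA₀ 0 PosSemidef.zero (by simpa using hpsd A₀ hA₀)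
    exact h
  have hα0 : (0 : ℝ) ≤ α := by simpa using hsupp 0 h0C
  have hn2 : 4 ≤ n ^ 2 := by nlinarith
  have key : α ≠ 0 := by
    intro hα
    subst hα
    set F := {X ∈ C | ((X * Y).trace).re = 0} with hFdef
    have h0F : (0 : Matrix (Fin n) (Fin n) ℂ) ∈ F := ⟨h0C, by simp⟩
    set V := Submodule.span ℝ F with hV
    have hdirV : (affineSpan ℝ F).direction = V := by
      rw [direction_affineSpan, vectorSpan_def]
      apply le_antisymm
      · rw [Submodule.span_le]
        intro x hx
        rw [Set.mem_vsub] at hx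
        obtain ⟨a, ha, b, hb, rfl⟩ := hx
        exact sub_mem (Submodule.subset_span ha) (Submodule.subset_span hb)
      · rw [Submodule.span_le]
        intro x hx
        apply Submodule.subset_span
        rw [Set.mem_vsub]
        exact ⟨x, hx, 0, h0F, by simp⟩
    have hdimV : Module.finrank ℝ V = n ^ 2 - 1 := by rw [← hdirV]; exact hdim
    have hheredF : ∀ X ∈ F, ∀ B : Matrix (Fin n) (Fin n) ℂ,
        B.PosSemidef → (X - B).PosSemidef → B ∈ F := by
      intro X hX B hB hXB
      have hBC : B ∈ C := hhered X hX.1 B hB hXB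
      have hXBC : X - B ∈ C := hhered X hX.1 (X - B) hXB (by simpa using hB)
      have h1 : ((B * Y).trace).re ≤ 0 := hsupp B hBC
      have h2 : (((X - B) * Y).trace).re ≤ 0 := hsupp _ hXBC
      have h3 : (((X - B) * Y).trace).re
          = ((X * Y).trace).re - ((B * Y).trace).re := by
        rw [sub_mul, trace_sub, Complex.sub_re]
      have hX2 : ((X * Y).trace).re = 0 := hX.2
      exact ⟨hBC, by linarith⟩
    obtain ⟨s, hs⟩ := IsNoetherian.noetherian V
    have hsub : ∀ x ∈ s, ∃ t : Finset (Matrix (Fin n) (Fin n) ℂ),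
        ↑t ⊆ F ∧ x ∈ Submodule.span ℝ (t : Set (Matrix (Fin n) (Fin n) ℂ)) := by
      intro x hx
      have hxV : x ∈ V := hs ▸ Submodule.subset_span (Finset.mem_coe.mpr hx)
      exact Submodule.mem_span_finite_of_mem_span hxV
    choose ts hts1 hts2 using hsub
    set t : Finset (Matrix (Fin n) (Fin n) ℂ) :=
      s.attach.biUnion (fun x => ts x.1 x.2) with htdef
    have htF : (t : Set (Matrix (Fin n) (Fin n) ℂ)) ⊆ F := by
      intro x hx
      rw [Finset.mem_coe, htdef, Finset.mem_biUnion] at hx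
      obtain ⟨a, _, hxa⟩ := hx
      exact hts1 a.1 a.2 hxa
    have htV : V ≤ Submodule.span ℝ (t : Set (Matrix (Fin n) (Fin n) ℂ)) := by
      rw [← hs, Submodule.span_le]
      intro x hx
      rw [Finset.mem_coe] at hx
      refine Submodule.span_mono ?_ (hts2 x hx)
      intro y hy
      rw [Finset.mem_coe] at hy ⊢
      rw [htdef, Finset.mem_biUnion]
      exact ⟨⟨x, hx⟩, Finset.mem_attach _ _, hy⟩
    have htne : t.Nonempty := by
      rcases Finset.eq_empty_or_nonempty t with h | h
      · exfalso
        rw [h] at htV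
        simp only [Finset.coe_empty, Submodule.span_empty, le_bot_iff] at htV
        rw [htV, finrank_bot] at hdimV
        omega
      · exact h
    set m := t.card with hm
    have hmpos : 0 < m := Finset.card_pos.mpr htne
    set S : Matrix (Fin n) (Fin n) ℂ := ∑ X ∈ t, X with hS
    set X₀ : Matrix (Fin n) (Fin n) ℂ := ((m : ℝ)⁻¹) • S with hX₀
    have hX₀C : X₀ ∈ C := by
      rw [hX₀, hS, Finset.smul_sum]
      refine hconv.sum_mem (fun i _ => by positivity) ?_ (fun i hi => (htF hi).1)
      rw [Finset.sum_const, hm, nsmul_eq_mul]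
      field_simp
    have hX₀F : X₀ ∈ F := by
      refine ⟨hX₀C, ?_⟩
      show traceRe Y X₀ = 0
      rw [hX₀, LinearMap.map_smul, hS, map_sum]
      have hz : ∀ X ∈ t, traceRe Y X = 0 := fun X hX => (htF hX).2
      rw [Finset.sum_congr rfl hz]
      simp
    have hX₀psd := hpsd X₀ hX₀C
    by_cases hker : ∃ v : Fin n → ℂ, v ≠ 0 ∧ X₀ *ᵥ v = 0
    · obtain ⟨v, hv0, hvk⟩ := hker
      have hSv : S *ᵥ v = 0 := by
        rw [hX₀, smul_mulVec] at hvk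
        rcases smul_eq_zero.mp hvk with h | h
        · exfalso
          have : (m : ℝ) ≠ 0 := Nat.cast_ne_zero.mpr hmpos.ne'
          simp [inv_eq_zero] at h
          omega
        · exact h
      have hXv : ∀ X ∈ t, X *ᵥ v = 0 := by
        intro X hX
        have hq : ∀ Z ∈ t, (0 : ℂ) ≤ star v ⬝ᵥ (Z *ᵥ v) :=
          fun Z hZ => (hpsd Z (htF hZ).1).dotProduct_mulVec_nonneg v
        have hsum : ∑ Z ∈ t, star v ⬝ᵥ (Z *ᵥ v) = 0 := by
          rw [← dot_sum_mulVec, ← hS, hSv, dotProduct_zero]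
        have h0 := (Finset.sum_eq_zero_iff_of_nonneg hq).mp hsum X hX
        exact ((hpsd X (htF hX).1).dotProduct_mulVec_zero_iff v).mp h0
      set φ : Matrix (Fin n) (Fin n) ℂ →ₗ[ℝ] (Fin n → ℂ) :=
        { toFun := fun Z => Z *ᵥ v
          map_add' := fun a b => add_mulVec a b v
          map_smul' := fun r a => smul_mulVec r a v } with hφ
      have hVle : V ≤ hermSubmodule n ⊓ LinearMap.ker φ := by
        refine le_trans htV ?_
        rw [Submodule.span_le]
        intro X hX
        exact ⟨(hpsd X (htF hX).1).1, hXv X hX⟩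
      set ψ := φ.comp (hermSubmodule n).subtype with hψ
      have hmap : (LinearMap.ker ψ).map (hermSubmodule n).subtype
          = hermSubmodule n ⊓ LinearMap.ker φ := by
        ext x
        constructor
        · rintro ⟨⟨y, hyH⟩, hy, rfl⟩
          exact ⟨hyH, hy⟩
        · rintro ⟨h1, h2⟩
          exact ⟨⟨x, h1⟩, h2, rfl⟩
      obtain ⟨u, hu0, huv⟩ : ∃ u : Fin n → ℂ, u ≠ 0 ∧ star v ⬝ᵥ u = 0 := by
        set g : (Fin n → ℂ) →ₗ[ℂ] ℂ :=
          { toFun := fun w => star v ⬝ᵥ w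
            map_add' := fun a b => dotProduct_add _ a b
            map_smul' := fun c w => by simp } with hg
        by_contra hcon
        push_neg at hcon
        have hginj : Function.Injective g := by
          rw [← LinearMap.ker_eq_bot, Submodule.eq_bot_iff]
          intro w hw
          by_contra hw0
          exact hcon w hw0 hw
        have hle := LinearMap.finrank_le_finrank_of_injective hginj
        rw [Module.finrank_self, Module.finrank_pi] at hle
        simp at hle
        omega
      set sv : ℂ := star v ⬝ᵥ v with hsv
      have hsv0 : sv ≠ 0 := fun h => hv0 (dotProduct_star_self_eq_zero.mp h)
      set Z₂ : Matrix (Fin n) (Fin n) ℂ :=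
        vecMulVec u (star v) + vecMulVec v (star u) with hZ₂
      have hZ₂herm : Z₂ ∈ hermSubmodule n := by
        show Z₂ᴴ = Z₂
        rw [hZ₂, conjTranspose_add, _root_.conjTranspose_vecMulVec, _root_.conjTranspose_vecMulVec]
        simp [add_comm]
      have h1herm : (1 : Matrix (Fin n) (Fin n) ℂ) ∈ hermSubmodule n := by
        show (1 : Matrix (Fin n) (Fin n) ℂ)ᴴ = 1
        simp
      have hψ1 : ψ ⟨1, h1herm⟩ = v := by
        show (1 : Matrix (Fin n) (Fin n) ℂ) *ᵥ v = v
        exact one_mulVec v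
      have huv' : star u ⬝ᵥ v = 0 := by
        have h := congrArg star huv
        rwa [star_dotProduct, star_star, star_zero] at h
      have hψ2 : ψ ⟨Z₂, hZ₂herm⟩ = sv • u := by
        show Z₂ *ᵥ v = sv • u
        rw [hZ₂, add_mulVec, vecMulVec_mulVec', vecMulVec_mulVec', huv', hsv]
        simp
      have hind : LinearIndependent ℝ ![v, sv • u] := by
        rw [LinearIndependent.pair_iff]
        intro a b hab
        have h1 : star v ⬝ᵥ (a • v + b • (sv • u)) = 0 := by rw [hab, dotProduct_zero]
        rw [dotProduct_add] at h1
        have e1 : star v ⬝ᵥ (a • v) = a • sv := by simp [hsv]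
        have e2 : star v ⬝ᵥ (b • (sv • u)) = (0 : ℂ) := by
          have : star v ⬝ᵥ (sv • u) = sv * (star v ⬝ᵥ u) := by simp
          simp [this, huv]
        rw [e1, e2, add_zero] at h1
        have ha : a = 0 := by
          have : (a : ℂ) * sv = 0 := by simpa [Complex.real_smul] using h1
          rcases mul_eq_zero.mp this with h | h
          · exact_mod_cast h
          · exact absurd h hsv0
        refine ⟨ha, ?_⟩
        rw [ha] at hab
        simp only [zero_smul, zero_add] at hab
        rcases smul_eq_zero.mp hab with h | h
        · exact h
        · exact absurd h (smul_ne_zero hsv0 hu0)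
      have hrange : 2 ≤ Module.finrank ℝ (LinearMap.range ψ) := by
        have hsp : Submodule.span ℝ (Set.range ![v, sv • u]) ≤ LinearMap.range ψ := by
          rw [Submodule.span_le]
          rintro x ⟨i, rfl⟩
          fin_cases i
          · exact ⟨⟨1, h1herm⟩, hψ1⟩
          · exact ⟨⟨Z₂, hZ₂herm⟩, hψ2⟩
        have hcard := finrank_span_eq_card hind
        simp only [Fintype.card_fin] at hcard
        calc 2 = Module.finrank ℝ (Submodule.span ℝ (Set.range ![v, sv • u])) := hcard.symm
          _ ≤ Module.finrank ℝ (LinearMap.range ψ) := Submodule.finrank_mono hsp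
      have hrn := LinearMap.finrank_range_add_finrank_ker ψ
      rw [finrank_hermSubmodule] at hrn
      have hle2 : Module.finrank ℝ V
          ≤ Module.finrank ℝ (hermSubmodule n ⊓ LinearMap.ker φ : Submodule ℝ _) :=
        Submodule.finrank_mono hVle
      rw [← hmap, Submodule.finrank_map_subtype_eq] at hle2
      omega
    · push_neg at hker
      have hPD : X₀.PosDef := by
        refine PosDef.of_dotProduct_mulVec_pos hX₀psd.1 fun x hx => ?_
        have h1 := hX₀psd.dotProduct_mulVec_nonneg x
        refine lt_of_le_of_ne h1 fun h => ?_
        exact hker x hx ((hX₀psd.dotProduct_mulVec_zero_iff x).mp h.symm)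
      obtain ⟨δ, hδ, hδpsd⟩ := posdef_lower (by omega) hPD
      have hpsdV : ∀ Q : Matrix (Fin n) (Fin n) ℂ, Q.PosSemidef → Q ∈ V := by
        intro Q hQ
        obtain ⟨ε, hε, hεpsd⟩ := psd_upper hQ δ hδ
        have hsub2 : (X₀ - (ε : ℂ) • Q).PosSemidef := by
          have hadd := hδpsd.add hεpsd
          rwa [sub_add_sub_cancel] at hadd
        have hQF : (ε : ℂ) • Q ∈ F := hheredF X₀ hX₀F _ (psd_smul hQ hε.le) hsub2
        have hQe : ε⁻¹ • ((ε : ℂ) • Q) = Q := by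
          rw [realSmul_matrix, smul_smul, inv_mul_cancel₀ hε.ne', one_smul]
        rw [← hQe]
        exact Submodule.smul_mem _ _ (Submodule.subset_span hQF)
      have hHV : hermSubmodule n ≤ V := by
        intro Z hZ
        obtain ⟨c, hc⟩ := shift_psd (hZ : Zᴴ = Z)
        have h1V : ((c : ℂ) • 1 + Z) ∈ V := hpsdV _ hc
        have h2V : ((c : ℂ) • (1 : Matrix (Fin n) (Fin n) ℂ)) ∈ V := by
          rw [realSmul_matrix]
          exact Submodule.smul_mem _ _ (hpsdV 1 PosSemidef.one)
        have hsubm := sub_mem h1V h2V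
        simpa using hsubm
      have hge := Submodule.finrank_mono hHV
      rw [finrank_hermSubmodule, hdimV] at hge
      omega
  have hαpos : 0 < α := lt_of_le_of_ne hα0 (Ne.symm key)
  have hcalc : ∀ X : Matrix (Fin n) (Fin n) ℂ,
      ((X * (((α⁻¹ : ℝ) : ℂ) • Y)).trace).re = α⁻¹ * ((X * Y).trace).re := by
    intro X
    rw [mul_smul_comm, trace_smul]
    simp [smul_eq_mul, Complex.re_ofReal_mul]
  refine ⟨key, ((α⁻¹ : ℝ) : ℂ) • Y, ?_, ?_, ?_⟩
  · show (((α⁻¹ : ℝ) : ℂ) • Y)ᴴ = ((α⁻¹ : ℝ) : ℂ) • Y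
    rw [conjTranspose_smul, hY.eq]
    congr 1
    simp [Complex.star_def, Complex.conj_ofReal]
  · intro X hX
    rw [hcalc X]
    calc α⁻¹ * ((X * Y).trace).re ≤ α⁻¹ * α :=
          mul_le_mul_of_nonneg_left (hsupp X hX) (by positivity)
      _ = 1 := inv_mul_cancel₀ key
  · ext X
    constructor
    · rintro ⟨h1, h2⟩
      exact ⟨h1, by rw [hcalc X, h2, inv_mul_cancel₀ key]⟩
    · rintro ⟨h1, h2⟩
      refine ⟨h1, ?_⟩
      rw [hcalc X] at h2
      field_simp at h2
      linarith
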